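/- arXiv:2401.07375 — 2 statements merged into one kernel-verified Lean document; each statement's English description precedes it below -/
import Mathlib

section
/- There is a constant C > 0 such that for all sufficiently large T, ∫_T^{2T} u_T(2t)^4 dt ≤ C · T (log T)^{4/3}, where u_T(t) = Σ_{n≤T} cos(t log n)/n. -/
open Real Filter

lemma harmonic_le (N : ℕ) : ∑ n ∈ Finset.Icc 1 N, (1:ℝ)/n ≤ 1 + Real.log N := by
  induction N with
  | zero => simp
  | succ N ih =>
    rw [Finset.sum_Icc_succ_top (by omega)]
    rcases Nat.eq_zero_or_pos N with h|h
    · subst h; simp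
    · have hN : (0:ℝ) < N := by exact_mod_cast h
      have hlog : Real.log N + 1/(N+1) ≤ Real.log (N+1) := by
        have h1 : Real.log ((N:ℝ)/(N+1)) ≤ (N:ℝ)/(N+1) - 1 :=
          Real.log_le_sub_one_of_pos (by positivity)
        rw [Real.log_div (ne_of_gt hN) (by positivity)] at h1
        have h2 : (N:ℝ)/(N+1) - 1 = -(1/(N+1)) := by field_simp; ring
        rw [h2] at h1; linarith
      have hc : ((N:ℝ)+1) = ((N+1 : ℕ) : ℝ) := by push_cast; ring
      calc ∑ n ∈ Finset.Icc 1 N, (1:ℝ)/n + 1/((N+1:ℕ):ℝ)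
            ≤ (1 + Real.log N) + 1/((N:ℝ)+1) := by rw [← hc]; linarith
        _ ≤ 1 + Real.log ((N:ℝ)+1) := by linarith
        _ = 1 + Real.log ((N+1:ℕ):ℝ) := by rw [hc]

lemma sq_tail_aux (K : ℕ) (hK : 1 ≤ K) :
    ∀ N, K ≤ N → ∑ n ∈ Finset.Icc (K+1) N, (1:ℝ)/n^2 ≤ 1/K - 1/N := by
  intro N
  induction N with
  | zero => intro h; omega
  | succ N ih =>
    intro h
    rcases Nat.lt_or_ge N K with h1|h1
    · have hKN : K = N + 1 := by omega
      subst hKN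
      rw [show Finset.Icc (N+1+1) (N+1) = ∅ from Finset.Icc_eq_empty (by omega)]
      simp
    · rw [Finset.sum_Icc_succ_top (by omega)]
      have hN : (0:ℝ) < N := by exact_mod_cast (by omega : 0 < N)
      have key : (1:ℝ)/((N+1:ℕ):ℝ)^2 ≤ 1/(N:ℝ) - 1/((N:ℝ)+1) := by
        push_cast
        rw [div_sub_div _ _ (ne_of_gt hN) (by positivity), div_le_div_iff₀ (by positivity) (by positivity)]
        nlinarith
      have := ih h1
      push_cast at *
      linarith

lemma sq_tail (K N : ℕ) (hK : 1 ≤ K) : ∑ n ∈ Finset.Icc (K+1) N, (1:ℝ)/n^2 ≤ 1/K := by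
  rcases Nat.lt_or_ge N K with h|h
  · rw [show Finset.Icc (K+1) N = ∅ from Finset.Icc_eq_empty (by omega)]
    simp
  · have := sq_tail_aux K hK N h
    have hN : (0:ℝ) < N := by exact_mod_cast (by omega : 0 < N)
    have : (0:ℝ) ≤ 1/(N:ℝ) := by positivity
    linarith [sq_tail_aux K hK N h]

lemma cos_int_eq (c a b : ℝ) (hc : c ≠ 0) :
    ∫ t in a..b, Real.cos (c*t) = (Real.sin (c*b) - Real.sin (c*a))/c := by
  rw [intervalIntegral.integral_comp_mul_left _ hc, integral_cos]
  simp [smul_eq_mul]; ring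

lemma cos_int_bound (c a b : ℝ) (hc : c ≠ 0) :
    |∫ t in a..b, Real.cos (c*t)| ≤ 2/|c| := by
  rw [cos_int_eq c a b hc, abs_div]
  gcongr
  calc |Real.sin (c*b) - Real.sin (c*a)| ≤ |Real.sin (c*b)| + |Real.sin (c*a)| := abs_sub _ _
    _ ≤ 1 + 1 := by gcongr <;> exact Real.abs_sin_le_one _
    _ = 2 := by norm_num

lemma pair_bound (p q a b : ℝ) (hp : 0 < p) (hq : 0 < q) (hpq : p ≠ q) :
    |∫ t in a..b, Real.cos ((2*t) * p) * Real.cos ((2*t) * q)| ≤ 1/|q - p| := by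
  have hne : p - q ≠ 0 := sub_ne_zero_of_ne hpq
  have h1 : (2*(p-q)) ≠ 0 := by simp [hne]
  have h2 : (2*(p+q)) ≠ 0 := by positivity
  have hcong : ∀ t : ℝ, Real.cos ((2*t) * p) * Real.cos ((2*t) * q)
      = Real.cos ((2*(p-q))*t) / 2 + Real.cos ((2*(p+q))*t) / 2 := by
    intro t
    have : Real.cos ((2*t)*p - (2*t)*q) + Real.cos ((2*t)*p + (2*t)*q)
        = 2 * (Real.cos ((2*t)*p) * Real.cos ((2*t)*q)) := by
      rw [Real.cos_add, Real.cos_sub]; ring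
    have e1 : (2*t)*p - (2*t)*q = (2*(p-q))*t := by ring
    have e2 : (2*t)*p + (2*t)*q = (2*(p+q))*t := by ring
    rw [e1, e2] at this
    linarith
  rw [intervalIntegral.integral_congr (g := fun t => Real.cos ((2*(p-q))*t) / 2 + Real.cos ((2*(p+q))*t) / 2)
      (fun t _ => hcong t)]
  rw [intervalIntegral.integral_add
      ((by fun_prop : Continuous fun t:ℝ => Real.cos ((2*(p-q))*t) / 2).intervalIntegrable a b)
      ((by fun_prop : Continuous fun t:ℝ => Real.cos ((2*(p+q))*t) / 2).intervalIntegrable a b)]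
  have i1 : ∫ t in a..b, Real.cos ((2*(p-q))*t) / 2 = (∫ t in a..b, Real.cos ((2*(p-q))*t)) / 2 :=
    intervalIntegral.integral_div 2 _
  have i2 : ∫ t in a..b, Real.cos ((2*(p+q))*t) / 2 = (∫ t in a..b, Real.cos ((2*(p+q))*t)) / 2 :=
    intervalIntegral.integral_div 2 _
  rw [i1, i2]
  have b1 := cos_int_bound (2*(p-q)) a b h1
  have b2 := cos_int_bound (2*(p+q)) a b h2
  have habs1 : |2*(p-q)| = 2 * |p-q| := by rw [abs_mul]; norm_num
  have habs2 : |2*(p+q)| = 2 * (p+q) := by rw [abs_mul]; norm_num; positivity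
  rw [habs1] at b1; rw [habs2] at b2
  have hap : 0 < |p - q| := abs_pos.mpr hne
  have hsum : |p - q| ≤ p + q := by
    calc |p - q| ≤ |p| + |q| := abs_sub _ _
      _ = p + q := by rw [abs_of_pos hp, abs_of_pos hq]
  have hfrac : 1/(p+q) ≤ 1/|p-q| := by
    apply one_div_le_one_div_of_le hap hsum
  have e3 : |q - p| = |p - q| := abs_sub_comm q p
  rw [e3]
  calc |(∫ t in a..b, Real.cos ((2*(p-q))*t)) / 2 + (∫ t in a..b, Real.cos ((2*(p+q))*t)) / 2|
      ≤ |(∫ t in a..b, Real.cos ((2*(p-q))*t))| / 2 + |(∫ t in a..b, Real.cos ((2*(p+q))*t))| / 2 := by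
        calc |(∫ t in a..b, Real.cos ((2*(p-q))*t)) / 2 + (∫ t in a..b, Real.cos ((2*(p+q))*t)) / 2|
            ≤ |(∫ t in a..b, Real.cos ((2*(p-q))*t)) / 2| + |(∫ t in a..b, Real.cos ((2*(p+q))*t)) / 2| := abs_add_le _ _
          _ = |(∫ t in a..b, Real.cos ((2*(p-q))*t))| / 2 + |(∫ t in a..b, Real.cos ((2*(p+q))*t))| / 2 := by
              rw [abs_div, abs_div]; norm_num
    _ ≤ (2/(2*|p-q|))/2 + (2/(2*(p+q)))/2 := by gcongr
    _ = (1/|p-q|)/2 + (1/(p+q))/2 := by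
          have h3 : |p-q| ≠ 0 := ne_of_gt hap
          have h4 : p+q ≠ 0 := by positivity
          field_simp
    _ ≤ 1/|p-q| := by linarith

lemma cont_c (n : ℕ) : Continuous fun t : ℝ => Real.cos ((2*t) * Real.log n) / n := by
  fun_prop

lemma pair_term_bound (a b : ℝ) (m n : ℕ) (hm : 2 ≤ m) (hn : 2 ≤ n) (hlt : m < n) :
    ∫ t in a..b, (Real.cos ((2*t) * Real.log m) / m) * (Real.cos ((2*t) * Real.log n) / n)
      ≤ 1/((m:ℝ) * ((n:ℝ) - (m:ℝ))) := by
  have hm1 : (1:ℝ) < m := by exact_mod_cast hm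
  have hn1 : (1:ℝ) < n := by
    have h' : 1 < n := by omega
    exact_mod_cast h'
  have hmn : (m:ℝ) < n := by exact_mod_cast hlt
  have hp : 0 < Real.log m := Real.log_pos hm1
  have hq : 0 < Real.log n := Real.log_pos hn1
  have hpq' : Real.log m < Real.log n := Real.log_lt_log (by positivity) hmn
  have key := pair_bound (Real.log m) (Real.log n) a b hp hq (ne_of_lt hpq')
  have hmpos : (0:ℝ) < m := by linarith
  have hnm : (0:ℝ) < (n:ℝ) - m := by linarith
  -- log n - log m ≥ (n - m)/n
  have hgap : ((n:ℝ) - m)/n ≤ Real.log n - Real.log m := by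
    have h1 : Real.log ((m:ℝ)/n) ≤ (m:ℝ)/n - 1 := Real.log_le_sub_one_of_pos (by positivity)
    rw [Real.log_div (by positivity) (by positivity)] at h1
    have h2 : (m:ℝ)/n - 1 = -(((n:ℝ) - m)/n) := by field_simp; ring
    rw [h2] at h1; linarith
  have habs : |Real.log n - Real.log m| = Real.log n - Real.log m := abs_of_pos (by linarith)
  rw [habs] at key
  have e1 : ∀ t : ℝ, (Real.cos ((2*t) * Real.log m) / m) * (Real.cos ((2*t) * Real.log n) / n)
      = (Real.cos ((2*t) * Real.log m) * Real.cos ((2*t) * Real.log n)) / ((m:ℝ)*n) := by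
    intro t; field_simp
  rw [intervalIntegral.integral_congr (g := fun t =>
      (Real.cos ((2*t) * Real.log m) * Real.cos ((2*t) * Real.log n)) / ((m:ℝ)*n))
      (fun t _ => e1 t)]
  rw [intervalIntegral.integral_div]
  have hmn2 : (0:ℝ) < (m:ℝ)*n := by positivity
  calc (∫ t in a..b, Real.cos ((2*t) * Real.log m) * Real.cos ((2*t) * Real.log n)) / ((m:ℝ)*n)
      ≤ |∫ t in a..b, Real.cos ((2*t) * Real.log m) * Real.cos ((2*t) * Real.log n)| / ((m:ℝ)*n) := by
        gcongr; exact le_abs_self _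
    _ ≤ (1/(Real.log n - Real.log m)) / ((m:ℝ)*n) := by gcongr
    _ = 1/(((m:ℝ)*n) * (Real.log n - Real.log m)) := by
        rw [div_div]; ring_nf
    _ ≤ 1/((m:ℝ) * ((n:ℝ) - (m:ℝ))) := by
        apply one_div_le_one_div_of_le (by positivity)
        calc (m:ℝ) * ((n:ℝ) - m) = ((m:ℝ)*n) * (((n:ℝ) - m)/n) := by field_simp
          _ ≤ ((m:ℝ)*n) * (Real.log n - Real.log m) := by gcongr

lemma diag_term_bound (T : ℝ) (hT : 0 ≤ T) (n : ℕ) (hn : 1 ≤ n) :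
    ∫ t in T..2*T, (Real.cos ((2*t) * Real.log n) / n) * (Real.cos ((2*t) * Real.log n) / n)
      ≤ T * (1/(n:ℝ)^2) := by
  have hn0 : (0:ℝ) < n := by exact_mod_cast hn
  have hmono : ∀ t ∈ Set.Icc T (2*T),
      (Real.cos ((2*t) * Real.log n) / n) * (Real.cos ((2*t) * Real.log n) / n) ≤ 1/(n:ℝ)^2 := by
    intro t _
    have h1 : (Real.cos ((2*t) * Real.log n))^2 ≤ 1 := Real.cos_sq_le_one _
    have : (Real.cos ((2*t) * Real.log n) / n) * (Real.cos ((2*t) * Real.log n) / n)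
        = (Real.cos ((2*t) * Real.log n))^2 / (n:ℝ)^2 := by ring
    rw [this]
    apply div_le_div_of_nonneg_right h1 (by positivity) |>.trans_eq rfl
  calc ∫ t in T..2*T, (Real.cos ((2*t) * Real.log n) / n) * (Real.cos ((2*t) * Real.log n) / n)
      ≤ ∫ _t in T..2*T, 1/(n:ℝ)^2 := by
        apply intervalIntegral.integral_mono_on (by linarith)
          (((cont_c n).mul (cont_c n)).intervalIntegrable T (2*T))
          (intervalIntegrable_const) hmono
    _ = T * (1/(n:ℝ)^2) := by
        rw [intervalIntegral.integral_const]
        rw [smul_eq_mul]; ring_nf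

lemma reindex_le (m N : ℕ) (hm : 1 ≤ m) :
    ∑ n ∈ Finset.Icc (m+1) N, (1:ℝ)/((n:ℝ) - (m:ℝ)) ≤ ∑ k ∈ Finset.Icc 1 N, (1:ℝ)/k := by
  have e : ∑ n ∈ Finset.Icc (m+1) N, (1:ℝ)/((n:ℝ) - (m:ℝ))
      = ∑ k ∈ Finset.Icc 1 (N-m), (1:ℝ)/k := by
    apply Finset.sum_nbij' (fun n => n - m) (fun k => k + m)
    · intro a ha; simp only [Finset.mem_Icc] at *; omega
    · intro a ha; simp only [Finset.mem_Icc] at *; omega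
    · intro a ha; simp only [Finset.mem_Icc] at *; omega
    · intro a ha; simp only [Finset.mem_Icc] at *; omega
    · intro a ha
      simp only [Finset.mem_Icc] at ha
      have : ((a - m : ℕ) : ℝ) = (a:ℝ) - m := by
        have : m ≤ a := by omega
        push_cast [this]; ring
      rw [this]
  rw [e]
  apply Finset.sum_le_sum_of_subset_of_nonneg
  · apply Finset.Icc_subset_Icc_right; omega
  · intro i _ _; positivity

lemma inner_sum_bound (m N : ℕ) (hm : 1 ≤ m) :
    ∑ n ∈ Finset.Icc 1 N, (if m < n then 1/((m:ℝ)*((n:ℝ)-(m:ℝ))) else 0)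
      ≤ (1/(m:ℝ)) * ∑ k ∈ Finset.Icc 1 N, (1:ℝ)/k := by
  have hfil : (Finset.Icc 1 N).filter (fun n => m < n) = Finset.Icc (m+1) N := by
    ext x; simp only [Finset.mem_filter, Finset.mem_Icc]; omega
  rw [← Finset.sum_filter, hfil]
  have hmpos : (0:ℝ) < m := by exact_mod_cast hm
  have e : ∀ n ∈ Finset.Icc (m+1) N, 1/((m:ℝ)*((n:ℝ)-(m:ℝ))) = (1/(m:ℝ)) * (1/((n:ℝ)-(m:ℝ))) := by
    intro n _
    rw [div_mul_eq_div_div]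
    ring
  rw [Finset.sum_congr rfl e, ← Finset.mul_sum]
  have := reindex_le m N hm
  have h1m : (0:ℝ) ≤ 1/(m:ℝ) := by positivity
  exact mul_le_mul_of_nonneg_left this h1m

lemma offdiag_sum_bound (N : ℕ) :
    ∑ m ∈ Finset.Icc 1 N, ∑ n ∈ Finset.Icc 1 N,
      (if m < n then 1/((m:ℝ)*((n:ℝ)-(m:ℝ))) else if n < m then 1/((n:ℝ)*((m:ℝ)-(n:ℝ))) else 0)
      ≤ 2 * (∑ k ∈ Finset.Icc 1 N, (1:ℝ)/k)^2 := by
  set H := ∑ k ∈ Finset.Icc 1 N, (1:ℝ)/k with hH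
  have hHnn : 0 ≤ H := by positivity
  have hsplit : ∀ m n : ℕ,
      (if m < n then 1/((m:ℝ)*((n:ℝ)-(m:ℝ))) else if n < m then 1/((n:ℝ)*((m:ℝ)-(n:ℝ))) else 0)
      = (if m < n then 1/((m:ℝ)*((n:ℝ)-(m:ℝ))) else 0)
        + (if n < m then 1/((n:ℝ)*((m:ℝ)-(n:ℝ))) else 0) := by
    intro m n
    rcases lt_trichotomy m n with h|h|h
    · simp [h, not_lt_of_gt h, asymm h]
    · simp [h, lt_irrefl]
    · simp [h, not_lt_of_gt h, asymm h]
  simp_rw [hsplit, Finset.sum_add_distrib]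
  have hA : ∑ m ∈ Finset.Icc 1 N, ∑ n ∈ Finset.Icc 1 N,
      (if m < n then 1/((m:ℝ)*((n:ℝ)-(m:ℝ))) else 0) ≤ H^2 := by
    calc ∑ m ∈ Finset.Icc 1 N, ∑ n ∈ Finset.Icc 1 N,
        (if m < n then 1/((m:ℝ)*((n:ℝ)-(m:ℝ))) else 0)
        ≤ ∑ m ∈ Finset.Icc 1 N, (1/(m:ℝ)) * H := by
          apply Finset.sum_le_sum
          intro m hm
          exact inner_sum_bound m N (Finset.mem_Icc.mp hm).1
      _ = H * H := by rw [← Finset.sum_mul, hH]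
      _ = H^2 := by ring
  have hB : ∑ m ∈ Finset.Icc 1 N, ∑ n ∈ Finset.Icc 1 N,
      (if n < m then 1/((n:ℝ)*((m:ℝ)-(n:ℝ))) else 0) ≤ H^2 := by
    rw [Finset.sum_comm]
    exact hA
  linarith

lemma w_sq_int (T : ℝ) (hT : 0 ≤ T) (K N : ℕ) (hK : 1 ≤ K) :
    ∫ t in T..(2*T), (∑ n ∈ Finset.Icc (K+1) N, Real.cos ((2*t) * Real.log n) / n)^2
      ≤ T * (1/(K:ℝ)) + 2 * (∑ k ∈ Finset.Icc 1 N, (1:ℝ)/k)^2 := by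
  set I := Finset.Icc (K+1) N with hI
  have hmem : ∀ n ∈ I, 2 ≤ n := by intro n hn; rw [hI, Finset.mem_Icc] at hn; omega
  have hIsub : I ⊆ Finset.Icc 1 N := by
    rw [hI]; apply Finset.Icc_subset_Icc_left; omega
  have hexp : (∫ t in T..(2*T), (∑ n ∈ I, Real.cos ((2*t) * Real.log n) / n)^2)
      = ∑ m ∈ I, ∑ n ∈ I, ∫ t in T..(2*T),
          (Real.cos ((2*t) * Real.log m) / m) * (Real.cos ((2*t) * Real.log n) / n) := by
    have hpt : ∀ t : ℝ, (∑ n ∈ I, Real.cos ((2*t) * Real.log n) / n)^2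
        = ∑ m ∈ I, ∑ n ∈ I, (Real.cos ((2*t) * Real.log m) / m) * (Real.cos ((2*t) * Real.log n) / n) := by
      intro t; rw [sq, Finset.sum_mul_sum]
    rw [intervalIntegral.integral_congr (g := fun t => ∑ m ∈ I, ∑ n ∈ I,
        (Real.cos ((2*t) * Real.log m) / m) * (Real.cos ((2*t) * Real.log n) / n))
        (fun t _ => hpt t)]
    rw [intervalIntegral.integral_finset_sum (f := fun (m : ℕ) (t : ℝ) => ∑ n ∈ I,
        (Real.cos ((2*t) * Real.log m) / m) * (Real.cos ((2*t) * Real.log n) / n)) (fun m _ =>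
      (continuous_finset_sum I (fun n _ => (cont_c m).mul (cont_c n))).intervalIntegrable T (2*T))]
    exact Finset.sum_congr rfl fun m _ =>
      intervalIntegral.integral_finset_sum (f := fun (n : ℕ) (t : ℝ) =>
        (Real.cos ((2*t) * Real.log m) / m) * (Real.cos ((2*t) * Real.log n) / n)) (fun n _ => ((cont_c m).mul (cont_c n)).intervalIntegrable T (2*T))
  rw [hexp]
  have hterm : ∀ m ∈ I, ∀ n ∈ I,
      (∫ t in T..(2*T), (Real.cos ((2*t) * Real.log m) / m) * (Real.cos ((2*t) * Real.log n) / n))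
      ≤ (if m = n then T * (1/(n:ℝ)^2) else 0)
        + (if m < n then 1/((m:ℝ)*((n:ℝ)-(m:ℝ))) else if n < m then 1/((n:ℝ)*((m:ℝ)-(n:ℝ))) else 0) := by
    intro m hm n hn
    rcases lt_trichotomy m n with h|h|h
    · have := pair_term_bound T (2*T) m n (hmem m hm) (hmem n hn) h
      simp only [if_pos h, if_neg (by omega : ¬ m = n)]
      linarith
    · subst h
      have := diag_term_bound T hT m (by have := hmem m hm; omega)
      rw [if_pos rfl, if_neg (lt_irrefl m), if_neg (lt_irrefl m)]
      linarith
    · have heq : ∀ t : ℝ, (Real.cos ((2*t) * Real.log m) / m) * (Real.cos ((2*t) * Real.log n) / n)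
          = (Real.cos ((2*t) * Real.log n) / n) * (Real.cos ((2*t) * Real.log m) / m) := by
        intro t; ring
      rw [intervalIntegral.integral_congr (fun t _ => heq t)]
      have := pair_term_bound T (2*T) n m (hmem n hn) (hmem m hm) h
      simp only [if_neg (by omega : ¬ m = n), if_neg (by omega : ¬ m < n), if_pos h]
      linarith
  calc ∑ m ∈ I, ∑ n ∈ I, ∫ t in T..(2*T),
          (Real.cos ((2*t) * Real.log m) / m) * (Real.cos ((2*t) * Real.log n) / n)
      ≤ ∑ m ∈ I, ∑ n ∈ I, ((if m = n then T * (1/(n:ℝ)^2) else 0)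
        + (if m < n then 1/((m:ℝ)*((n:ℝ)-(m:ℝ))) else if n < m then 1/((n:ℝ)*((m:ℝ)-(n:ℝ))) else 0)) := by
        apply Finset.sum_le_sum; intro m hm
        apply Finset.sum_le_sum; intro n hn
        exact hterm m hm n hn
    _ = (∑ m ∈ I, ∑ n ∈ I, (if m = n then T * (1/(n:ℝ)^2) else 0))
        + ∑ m ∈ I, ∑ n ∈ I, (if m < n then 1/((m:ℝ)*((n:ℝ)-(m:ℝ))) else if n < m then 1/((n:ℝ)*((m:ℝ)-(n:ℝ))) else 0) := by
        rw [← Finset.sum_add_distrib]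
        exact Finset.sum_congr rfl fun m _ => Finset.sum_add_distrib
    _ ≤ T * (1/(K:ℝ)) + 2 * (∑ k ∈ Finset.Icc 1 N, (1:ℝ)/k)^2 := by
        have hdiag : (∑ m ∈ I, ∑ n ∈ I, (if m = n then T * (1/(n:ℝ)^2) else 0)) ≤ T * (1/(K:ℝ)) := by
          have : ∀ m ∈ I, (∑ n ∈ I, (if m = n then T * (1/(n:ℝ)^2) else 0)) = T * (1/(m:ℝ)^2) := by
            intro m hm
            rw [Finset.sum_ite_eq I m (fun n => T * (1/(n:ℝ)^2)), if_pos hm]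
          rw [Finset.sum_congr rfl this, ← Finset.mul_sum]
          have := sq_tail K N hK
          have h2 : ∑ n ∈ I, (1:ℝ)/(n:ℝ)^2 ≤ 1/(K:ℝ) := this
          exact mul_le_mul_of_nonneg_left h2 hT
        have hoff : ∑ m ∈ I, ∑ n ∈ I, (if m < n then 1/((m:ℝ)*((n:ℝ)-(m:ℝ))) else if n < m then 1/((n:ℝ)*((m:ℝ)-(n:ℝ))) else 0)
            ≤ 2 * (∑ k ∈ Finset.Icc 1 N, (1:ℝ)/k)^2 := by
          have hnn : ∀ m n : ℕ, 0 ≤ (if m < n then 1/((m:ℝ)*((n:ℝ)-(m:ℝ))) else if n < m then 1/((n:ℝ)*((m:ℝ)-(n:ℝ))) else 0) := by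
            intro m n
            rcases lt_trichotomy m n with h|h|h
            · rw [if_pos h]
              have h1 : (0:ℝ) ≤ m := Nat.cast_nonneg m
              have h2 : (0:ℝ) < (n:ℝ) - m := by
                have : (m:ℝ) < n := by exact_mod_cast h
                linarith
              positivity
            · subst h; simp
            · rw [if_neg (by omega), if_pos h]
              have h2 : (0:ℝ) < (m:ℝ) - n := by
                have : (n:ℝ) < m := by exact_mod_cast h
                linarith
              positivity
          calc ∑ m ∈ I, ∑ n ∈ I, (if m < n then 1/((m:ℝ)*((n:ℝ)-(m:ℝ))) else if n < m then 1/((n:ℝ)*((m:ℝ)-(n:ℝ))) else 0)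
              ≤ ∑ m ∈ I, ∑ n ∈ Finset.Icc 1 N, (if m < n then 1/((m:ℝ)*((n:ℝ)-(m:ℝ))) else if n < m then 1/((n:ℝ)*((m:ℝ)-(n:ℝ))) else 0) := by
                apply Finset.sum_le_sum; intro m _
                exact Finset.sum_le_sum_of_subset_of_nonneg hIsub (fun n _ _ => hnn m n)
            _ ≤ ∑ m ∈ Finset.Icc 1 N, ∑ n ∈ Finset.Icc 1 N, (if m < n then 1/((m:ℝ)*((n:ℝ)-(m:ℝ))) else if n < m then 1/((n:ℝ)*((m:ℝ)-(n:ℝ))) else 0) := by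
                apply Finset.sum_le_sum_of_subset_of_nonneg hIsub
                intro m _ _
                exact Finset.sum_nonneg (fun n _ => hnn m n)
            _ ≤ 2 * (∑ k ∈ Finset.Icc 1 N, (1:ℝ)/k)^2 := offdiag_sum_bound N
        linarith

lemma abs_sum_le_harm (s : Finset ℕ) (t : ℝ) :
    |∑ n ∈ s, Real.cos ((2*t) * Real.log n) / n| ≤ ∑ n ∈ s, (1:ℝ)/n := by
  calc |∑ n ∈ s, Real.cos ((2*t) * Real.log n) / n|
      ≤ ∑ n ∈ s, |Real.cos ((2*t) * Real.log n) / n| := Finset.abs_sum_le_sum_abs _ _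
    _ ≤ ∑ n ∈ s, (1:ℝ)/n := by
        apply Finset.sum_le_sum
        intro n _
        rcases Nat.eq_zero_or_pos n with h|h
        · subst h; simp
        · have hn : (0:ℝ) < n := by exact_mod_cast h
          rw [abs_div, abs_of_pos hn]
          gcongr
          exact Real.abs_cos_le_one _

lemma fourth_pow_int_bound (T : ℝ) (hT : 0 ≤ T) (s : Finset ℕ) (B : ℝ)
    (hB : ∑ n ∈ s, (1:ℝ)/n ≤ B) :
    ∫ t in T..(2*T), (∑ n ∈ s, Real.cos ((2*t) * Real.log n) / n)^4 ≤ T * B^4 := by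
  have hBnn : 0 ≤ B := le_trans (by positivity) hB
  have hpt : ∀ t ∈ Set.Icc T (2*T),
      (∑ n ∈ s, Real.cos ((2*t) * Real.log n) / n)^4 ≤ B^4 := by
    intro t _
    have h1 := abs_sum_le_harm s t
    calc (∑ n ∈ s, Real.cos ((2*t) * Real.log n) / n)^4
        = |∑ n ∈ s, Real.cos ((2*t) * Real.log n) / n|^4 := by
          rw [pow_abs, abs_of_nonneg (by positivity)]
      _ ≤ B^4 := pow_le_pow_left₀ (abs_nonneg _) (le_trans h1 hB) 4
  calc ∫ t in T..(2*T), (∑ n ∈ s, Real.cos ((2*t) * Real.log n) / n)^4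
      ≤ ∫ _t in T..(2*T), B^4 := by
        apply intervalIntegral.integral_mono_on (by linarith)
          (((continuous_finset_sum s (fun n _ => cont_c n)).pow 4).intervalIntegrable T (2*T))
          intervalIntegrable_const hpt
    _ = T * B^4 := by rw [intervalIntegral.integral_const, smul_eq_mul]; ring_nf

lemma fourth_le_sq_mul (T : ℝ) (hT : 0 ≤ T) (s : Finset ℕ) (S : ℝ)
    (hS : ∑ n ∈ s, (1:ℝ)/n ≤ S) :
    ∫ t in T..(2*T), (∑ n ∈ s, Real.cos ((2*t) * Real.log n) / n)^4
      ≤ S^2 * ∫ t in T..(2*T), (∑ n ∈ s, Real.cos ((2*t) * Real.log n) / n)^2 := by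
  have hSnn : 0 ≤ S := le_trans (by positivity) hS
  have hcont : Continuous fun t : ℝ => ∑ n ∈ s, Real.cos ((2*t) * Real.log n) / n :=
    continuous_finset_sum s (fun n _ => cont_c n)
  have hpt : ∀ t ∈ Set.Icc T (2*T),
      (∑ n ∈ s, Real.cos ((2*t) * Real.log n) / n)^4
      ≤ S^2 * (∑ n ∈ s, Real.cos ((2*t) * Real.log n) / n)^2 := by
    intro t _
    set X := ∑ n ∈ s, Real.cos ((2*t) * Real.log n) / n with hX
    have h1 : X^2 ≤ S^2 := by
      have := abs_sum_le_harm s t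
      rw [← hX] at this
      calc X^2 = |X|^2 := (sq_abs X).symm
        _ ≤ S^2 := pow_le_pow_left₀ (abs_nonneg _) (le_trans this hS) 2
    calc X^4 = X^2 * X^2 := by ring
      _ ≤ S^2 * X^2 := mul_le_mul_of_nonneg_right h1 (sq_nonneg X)
  calc ∫ t in T..(2*T), (∑ n ∈ s, Real.cos ((2*t) * Real.log n) / n)^4
      ≤ ∫ t in T..(2*T), S^2 * (∑ n ∈ s, Real.cos ((2*t) * Real.log n) / n)^2 := by
        apply intervalIntegral.integral_mono_on (by linarith)
          ((hcont.pow 4).intervalIntegrable T (2*T))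
          ((by fun_prop : Continuous fun t : ℝ => S^2 * (∑ n ∈ s, Real.cos ((2*t) * Real.log n) / n)^2).intervalIntegrable T (2*T)) hpt
    _ = S^2 * ∫ t in T..(2*T), (∑ n ∈ s, Real.cos ((2*t) * Real.log n) / n)^2 :=
        intervalIntegral.integral_const_mul _ _

lemma quar_ineq (a b : ℝ) : (a+b)^4 ≤ 8*a^4 + 8*b^4 := by
  nlinarith [sq_nonneg (a-b), sq_nonneg (a+b), sq_nonneg (a^2-b^2), sq_nonneg (a^2+b^2), sq_nonneg (a*b)]

lemma c4_aux : ∀ᶠ y : ℝ in atTop, 1 + Real.log ((⌊y^4⌋₊ + 1 : ℕ):ℝ) ≤ y^(1/3:ℝ) := by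
  filter_upwards [eventually_ge_atTop (16777216:ℝ)] with y hy
  have hy1 : (1:ℝ) ≤ y := by linarith
  have hy0 : (0:ℝ) ≤ y := by linarith
  have hy4 : (1:ℝ) ≤ y^4 := one_le_pow₀ hy1
  have hK1 : ((⌊y^4⌋₊ + 1 : ℕ):ℝ) ≤ 2*y^4 := by
    push_cast
    have := Nat.floor_le (show (0:ℝ) ≤ y^4 by positivity)
    linarith
  have hKpos : (0:ℝ) < ((⌊y^4⌋₊ + 1 : ℕ):ℝ) := by positivity
  have hlogK : Real.log ((⌊y^4⌋₊ + 1 : ℕ):ℝ) ≤ Real.log 2 + 4 * Real.log y := by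
    calc Real.log ((⌊y^4⌋₊ + 1 : ℕ):ℝ) ≤ Real.log (2*y^4) := Real.log_le_log hKpos hK1
      _ = Real.log 2 + 4 * Real.log y := by
          rw [Real.log_mul (by norm_num) (by positivity), Real.log_pow]
          push_cast; ring
  have hlog2 : Real.log 2 ≤ 1 := by
    have := Real.log_le_sub_one_of_pos (show (0:ℝ) < 2 by norm_num)
    linarith
  have hlogy : Real.log y ≤ 12 * y^(1/12:ℝ) := by
    have := Real.log_le_rpow_div hy0 (show (0:ℝ) < 1/12 by norm_num)
    calc Real.log y ≤ y^(1/12:ℝ) / (1/12) := this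
      _ = 12 * y^(1/12:ℝ) := by ring
  set z := y^(1/12:ℝ) with hz
  have hz4 : (4:ℝ) ≤ z := by
    have h1 : ((4:ℝ)^(12:ℕ))^(1/12:ℝ) ≤ y^(1/12:ℝ) := by
      apply Real.rpow_le_rpow (by positivity) _ (by norm_num)
      norm_num; linarith
    have h2 : ((4:ℝ)^(12:ℕ))^(1/12:ℝ) = 4 := by
      rw [← Real.rpow_natCast 4 12, ← Real.rpow_mul (by norm_num)]
      norm_num
    rw [h2] at h1; exact h1
  have hz13 : y^(1/3:ℝ) = z^(4:ℕ) := by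
    rw [hz, ← Real.rpow_natCast (y^(1/12:ℝ)) 4, ← Real.rpow_mul hy0]
    norm_num
  rw [hz13]
  have : 1 + Real.log ((⌊y^4⌋₊ + 1 : ℕ):ℝ) ≤ 2 + 48 * z := by
    have : 4 * Real.log y ≤ 48 * z := by linarith
    linarith
  have hz0 : 0 ≤ z := by positivity
  have h64 : (64:ℝ) ≤ z^3 := by
    calc (64:ℝ) = 4^3 := by norm_num
      _ ≤ z^3 := pow_le_pow_left₀ (by norm_num) hz4 3
  have h5 : 64*z ≤ z^4 := by nlinarith [mul_le_mul_of_nonneg_left h64 hz0]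
  linarith

theorem fourth_moment_of_u_T :
    ∃ C > 0, ∀ᶠ T : ℝ in atTop,
      (∫ t in T..(2 * T),
          (∑ n ∈ Finset.Icc 1 ⌊T⌋₊, Real.cos ((2 * t) * Real.log n) / (n : ℝ)) ^ 4)
        ≤ C * T * (Real.log T) ^ ((4 : ℝ) / 3) := by
  refine ⟨32, by norm_num, ?_⟩
  have h1 : ∀ᶠ T : ℝ in atTop, (3:ℝ) ≤ T := eventually_ge_atTop 3
  have h2 : ∀ᶠ T : ℝ in atTop, (2:ℝ) ≤ Real.log T := Real.tendsto_log_atTop.eventually_ge_atTop 2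
  have h3 : ∀ᶠ T : ℝ in atTop, (17:ℝ) ≤ Real.exp (Real.log T) / (Real.log T)^4 :=
    Real.tendsto_log_atTop.eventually ((Real.tendsto_exp_div_pow_atTop 4).eventually_ge_atTop 17)
  have h4 := Real.tendsto_log_atTop.eventually c4_aux
  filter_upwards [h1, h2, h3, h4] with T hT3 hy2 hTexp hc4
  set y := Real.log T with hy
  have hT0 : (0:ℝ) < T := by linarith
  have hTnn : (0:ℝ) ≤ T := le_of_lt hT0
  have hy1 : (1:ℝ) ≤ y := by linarith
  have hy0 : (0:ℝ) ≤ y := by linarith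
  have hy4pos : (0:ℝ) < y^4 := by positivity
  have hy4one : (1:ℝ) ≤ y^4 := one_le_pow₀ hy1
  rw [Real.exp_log hT0] at hTexp
  have hT17 : 17 * y^4 ≤ T := (le_div_iff₀ hy4pos).mp hTexp
  set N := ⌊T⌋₊ with hN
  set K := ⌊y^4⌋₊ + 1 with hK
  have hKub : (K:ℝ) ≤ y^4 + 1 := by
    rw [hK]; push_cast
    have := Nat.floor_le (le_of_lt hy4pos)
    linarith
  have hKlb : y^4 ≤ (K:ℝ) := by
    rw [hK]; push_cast
    exact le_of_lt (Nat.lt_floor_add_one _)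
  have hKN : K ≤ N := by
    have hNlb : T - 1 < (N:ℝ) := by
      rw [hN]
      have := Nat.lt_floor_add_one T
      linarith
    have hKltN : (K:ℝ) < (N:ℝ) := by nlinarith
    exact_mod_cast le_of_lt hKltN
  have hK1 : 1 ≤ K := by rw [hK]; omega
  have hN1 : 1 ≤ N := le_trans hK1 hKN
  have hNT : (N:ℝ) ≤ T := Nat.floor_le hTnn
  have hNpos : (0:ℝ) < N := by exact_mod_cast hN1
  have hlogN : Real.log N ≤ y := by rw [hy]; exact Real.log_le_log hNpos hNT
  have hsplit : ∀ t:ℝ, (∑ n ∈ Finset.Icc 1 N, Real.cos ((2*t) * Real.log n) / (n:ℝ))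
      = (∑ n ∈ Finset.Icc 1 K, Real.cos ((2*t) * Real.log n) / (n:ℝ))
        + (∑ n ∈ Finset.Icc (K+1) N, Real.cos ((2*t) * Real.log n) / (n:ℝ)) := by
    intro t
    have e1 : ∀ M:ℕ, Finset.Icc 1 M = Finset.Ioc 0 M := fun M => by
      ext x; simp only [Finset.mem_Icc, Finset.mem_Ioc]; omega
    have e2 : Finset.Icc (K+1) N = Finset.Ioc K N := by
      ext x; simp only [Finset.mem_Icc, Finset.mem_Ioc]; omega
    rw [e1, e1, e2, Finset.sum_Ioc_consecutive _ (Nat.zero_le K) hKN]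
  set v := fun t:ℝ => ∑ n ∈ Finset.Icc 1 K, Real.cos ((2*t) * Real.log n) / (n:ℝ) with hv
  set w := fun t:ℝ => ∑ n ∈ Finset.Icc (K+1) N, Real.cos ((2*t) * Real.log n) / (n:ℝ) with hw
  have hcv : Continuous v := continuous_finset_sum _ (fun n _ => cont_c n)
  have hcw : Continuous w := continuous_finset_sum _ (fun n _ => cont_c n)
  have step1 : (∫ t in T..(2*T), (∑ n ∈ Finset.Icc 1 N, Real.cos ((2*t) * Real.log n) / (n:ℝ))^4)
      ≤ 8 * (∫ t in T..(2*T), v t ^ 4) + 8 * (∫ t in T..(2*T), w t ^ 4) := by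
    have e : ∀ t ∈ Set.Icc T (2*T),
        (∑ n ∈ Finset.Icc 1 N, Real.cos ((2*t) * Real.log n) / (n:ℝ))^4
          ≤ 8 * v t ^ 4 + 8 * w t ^ 4 := by
      intro t _
      rw [hsplit t]
      exact quar_ineq (v t) (w t)
    calc (∫ t in T..(2*T), (∑ n ∈ Finset.Icc 1 N, Real.cos ((2*t) * Real.log n) / (n:ℝ))^4)
        ≤ ∫ t in T..(2*T), (8 * v t ^ 4 + 8 * w t ^ 4) := by
          apply intervalIntegral.integral_mono_on (by linarith)
            (((continuous_finset_sum _ (fun n _ => cont_c n)).pow 4).intervalIntegrable T (2*T))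
            (((continuous_const.mul (hcv.pow 4)).add (continuous_const.mul (hcw.pow 4))).intervalIntegrable T (2*T)) e
      _ = 8 * (∫ t in T..(2*T), v t ^ 4) + 8 * (∫ t in T..(2*T), w t ^ 4) := by
          rw [intervalIntegral.integral_add (f := fun t => 8 * v t ^ 4) (g := fun t => 8 * w t ^ 4) ((continuous_const.mul (hcv.pow 4)).intervalIntegrable T (2*T))
            ((continuous_const.mul (hcw.pow 4)).intervalIntegrable T (2*T)),
            intervalIntegral.integral_const_mul, intervalIntegral.integral_const_mul]
  have hBv : ∑ n ∈ Finset.Icc 1 K, (1:ℝ)/n ≤ y^(1/3:ℝ) := le_trans (harmonic_le K) hc4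
  have hv4 : (∫ t in T..(2*T), v t ^ 4) ≤ T * (y^(1/3:ℝ))^4 :=
    fourth_pow_int_bound T hTnn _ _ hBv
  have hpow : (y^(1/3:ℝ))^(4:ℕ) = y^((4:ℝ)/3) := by
    rw [← Real.rpow_natCast (y^(1/3:ℝ)) 4, ← Real.rpow_mul hy0]
    norm_num
  have hH : ∑ k ∈ Finset.Icc 1 N, (1:ℝ)/k ≤ 1 + y := le_trans (harmonic_le N) (by linarith)
  have hSw : ∑ n ∈ Finset.Icc (K+1) N, (1:ℝ)/n ≤ 1 + y := by
    refine le_trans (Finset.sum_le_sum_of_subset_of_nonneg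
      (Finset.Icc_subset_Icc_left (by omega)) (fun i _ _ => by positivity)) hH
  have hw2 := w_sq_int T hTnn K N hK1
  have hw4a := fourth_le_sq_mul T hTnn (Finset.Icc (K+1) N) (1+y) hSw
  have hHsq : (∑ k ∈ Finset.Icc 1 N, (1:ℝ)/k)^2 ≤ (1+y)^2 :=
    pow_le_pow_left₀ (by positivity) hH 2
  have h1K : T * (1/(K:ℝ)) ≤ T/y^4 := by
    have : (1:ℝ)/(K:ℝ) ≤ 1/y^4 := one_div_le_one_div_of_le hy4pos hKlb
    calc T * (1/(K:ℝ)) ≤ T * (1/y^4) := mul_le_mul_of_nonneg_left this hTnn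
      _ = T/y^4 := by ring
  have hw2ub : (∫ t in T..(2*T), w t ^ 2) ≤ T/y^4 + 2*(1+y)^2 := by
    calc (∫ t in T..(2*T), w t ^ 2) ≤ T * (1/(K:ℝ)) + 2 * (∑ k ∈ Finset.Icc 1 N, (1:ℝ)/k)^2 := hw2
      _ ≤ T/y^4 + 2*(1+y)^2 := by linarith
  have hw4 : (∫ t in T..(2*T), w t ^ 4) ≤ (1+y)^2*(T/y^4) + 2*(1+y)^4 := by
    calc (∫ t in T..(2*T), w t ^ 4) ≤ (1+y)^2 * (∫ t in T..(2*T), w t ^ 2) := hw4a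
      _ ≤ (1+y)^2 * (T/y^4 + 2*(1+y)^2) := mul_le_mul_of_nonneg_left hw2ub (by positivity)
      _ = (1+y)^2*(T/y^4) + 2*(1+y)^4 := by ring
  have hA : (1+y)^2 ≤ y^4 := by
    have ha1 : 1 + y ≤ y^2 := by nlinarith
    have ha2 : (1+y)^2 ≤ (y^2)^2 := pow_le_pow_left₀ (by linarith) ha1 2
    have ha3 : (y^2)^2 = y^4 := by ring
    linarith
  have hB : (1+y)^4 ≤ T := by
    have h2y : 1 + y ≤ 2*y := by linarith
    have h3 : (1+y)^4 ≤ (2*y)^4 := pow_le_pow_left₀ (by positivity) h2y 4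
    have h4 : (2*y)^4 = 16*y^4 := by ring
    linarith
  have hdivnn : (0:ℝ) ≤ T/y^4 := by positivity
  have hfrac : (1+y)^2*(T/y^4) ≤ T := by
    calc (1+y)^2*(T/y^4) ≤ y^4 * (T/y^4) := mul_le_mul_of_nonneg_right hA hdivnn
      _ = T := by field_simp
  have hw4' : (∫ t in T..(2*T), w t ^ 4) ≤ 3*T := by linarith
  have hone : (1:ℝ) ≤ y^((4:ℝ)/3) := Real.one_le_rpow hy1 (by norm_num)
  calc (∫ t in T..(2*T), (∑ n ∈ Finset.Icc 1 N, Real.cos ((2*t) * Real.log n) / (n:ℝ))^4)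
      ≤ 8 * (∫ t in T..(2*T), v t ^ 4) + 8 * (∫ t in T..(2*T), w t ^ 4) := step1
    _ ≤ 8 * (T * y^((4:ℝ)/3)) + 8 * (3*T) := by
        rw [← hpow]
        have := hv4
        gcongr
    _ ≤ 8 * (T * y^((4:ℝ)/3)) + 24 * (T * y^((4:ℝ)/3)) := by
        have : T ≤ T * y^((4:ℝ)/3) := le_mul_of_one_le_right hTnn hone
        linarith
    _ = 32 * T * y^((4:ℝ)/3) := by ring
end

section
/- There is a constant C > 0 such that for all sufficiently large T, ∫_T^{2T} |u_T(2t)| · |u_T''(2t)| dt ≤ C · T, where u_T(t) = Σ_{n≤T} cos(t log n)/n and u_T''(t) = −Σ_{n≤T} cos(t log n)(log n)²/n is its second derivative. -/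
open Real Filter

lemma one_le_sqrt' {x : ℝ} (hx : 1 ≤ x) : 1 ≤ Real.sqrt x := by
  nlinarith [Real.sq_sqrt (le_trans zero_le_one hx), Real.sqrt_nonneg x]

lemma osc_bound (a b d : ℝ) (hd : d ≠ 0) :
    |∫ t in a..b, Real.cos ((2 * t) * d)| ≤ 1 / |d| := by
  have h : (fun t : ℝ => Real.cos ((2 * t) * d)) = fun t => Real.cos (t * (2 * d)) := by
    funext t; ring_nf
  rw [h]
  have h2d : (2 : ℝ) * d ≠ 0 := by positivity
  rw [intervalIntegral.integral_comp_mul_right (fun x => Real.cos x) h2d]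
  rw [integral_cos, smul_eq_mul]
  rw [abs_mul, abs_inv]
  have h1 : |Real.sin (b * (2*d)) - Real.sin (a * (2*d))| ≤ 2 := by
    have := abs_sub_abs_le_abs_sub (Real.sin (b*(2*d))) (Real.sin (a*(2*d)))
    calc |Real.sin (b * (2*d)) - Real.sin (a * (2*d))|
        ≤ |Real.sin (b * (2*d))| + |Real.sin (a * (2*d))| := abs_sub _ _
      _ ≤ 1 + 1 := add_le_add (Real.abs_sin_le_one _) (Real.abs_sin_le_one _)
      _ = 2 := by norm_num
  have : |2 * d| = 2 * |d| := by rw [abs_mul]; norm_num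
  rw [this]
  rw [mul_inv]
  calc (2:ℝ)⁻¹ * |d|⁻¹ * |Real.sin (b * (2*d)) - Real.sin (a * (2*d))|
      ≤ 2⁻¹ * |d|⁻¹ * 2 := by
        apply mul_le_mul_of_nonneg_left h1; positivity
    _ = 1 / |d| := by field_simp

lemma harm_le (N : ℕ) : ∑ k ∈ Finset.Icc 1 N, 1 / (k:ℝ) ≤ 1 + Real.log N := by
  have h1 : ∑ k ∈ Finset.Icc 1 N, 1 / (k:ℝ) = ((harmonic N : ℚ) : ℝ) := by
    rw [harmonic_eq_sum_Icc]
    push_cast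
    simp [one_div]
  rw [h1]
  exact harmonic_le_one_add_log N

lemma log_pow4 (n : ℕ) (hn : 1 ≤ n) :
    (1 + Real.log n)^4 ≤ 4096 * Real.sqrt n := by
  have hn1 : (1:ℝ) ≤ (n:ℝ) := by exact_mod_cast hn
  set s := Real.sqrt (Real.sqrt (Real.sqrt n)) with hs_def
  have hs1 : 1 ≤ s := by
    exact one_le_sqrt' (one_le_sqrt' (one_le_sqrt' hn1))
  have hs0 : 0 < s := by linarith
  have hlog : Real.log n = 8 * Real.log s := by
    rw [hs_def, Real.log_sqrt (by positivity), Real.log_sqrt (by positivity),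
      Real.log_sqrt (by positivity)]
    ring
  have hls : Real.log s ≤ s - 1 := Real.log_le_sub_one_of_pos hs0
  have h1 : 1 + Real.log n ≤ 8 * s := by rw [hlog]; nlinarith
  have h0 : (0:ℝ) ≤ 1 + Real.log n := by
    have := Real.log_nonneg hn1; linarith
  have h4 : (1 + Real.log n)^4 ≤ (8*s)^4 := by
    exact pow_le_pow_left₀ h0 h1 4
  have hs4 : s^4 = Real.sqrt n := by
    rw [hs_def]
    rw [show (4:ℕ) = 2*2 from rfl, pow_mul, Real.sq_sqrt (by positivity), Real.sq_sqrt (by positivity)]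
  calc (1 + Real.log n)^4 ≤ (8*s)^4 := h4
    _ = 4096 * s^4 := by ring
    _ = 4096 * Real.sqrt n := by rw [hs4]

lemma log_pow6 (T : ℝ) (hT : 1 ≤ T) :
    (1 + Real.log T)^6 ≤ 16777216 * Real.sqrt T := by
  set s := Real.sqrt (Real.sqrt (Real.sqrt (Real.sqrt T))) with hs_def
  have hs1 : 1 ≤ s := by
    exact one_le_sqrt' (one_le_sqrt' (one_le_sqrt' (one_le_sqrt' hT)))
  have hs0 : 0 < s := by linarith
  have hlog : Real.log T = 16 * Real.log s := by
    rw [hs_def, Real.log_sqrt (by positivity), Real.log_sqrt (by positivity),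
      Real.log_sqrt (by positivity), Real.log_sqrt (by positivity)]
    ring
  have hls : Real.log s ≤ s - 1 := Real.log_le_sub_one_of_pos hs0
  have h1 : 1 + Real.log T ≤ 16 * s := by rw [hlog]; nlinarith
  have h0 : (0:ℝ) ≤ 1 + Real.log T := by have := Real.log_nonneg hT; linarith
  have h6 : (1 + Real.log T)^6 ≤ (16*s)^6 := pow_le_pow_left₀ h0 h1 6
  have hs8 : s^8 = Real.sqrt T := by
    rw [hs_def]
    rw [show (8:ℕ) = 2*2*2 from rfl, pow_mul, pow_mul, Real.sq_sqrt (by positivity),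
      Real.sq_sqrt (by positivity), Real.sq_sqrt (by positivity)]
  have hs68 : s^6 ≤ s^8 := pow_le_pow_right₀ hs1 (by norm_num)
  calc (1 + Real.log T)^6 ≤ (16*s)^6 := h6
    _ = 16777216 * s^6 := by ring
    _ ≤ 16777216 * s^8 := by linarith
    _ = 16777216 * Real.sqrt T := by rw [hs8]

lemma sqrt_step (N : ℕ) (hN : 1 ≤ N) :
    1 / (((N:ℝ)+1) * Real.sqrt ((N:ℝ)+1)) ≤ 2 / Real.sqrt N - 2 / Real.sqrt ((N:ℝ)+1) := by
  have hN1 : (1:ℝ) ≤ (N:ℝ) := by exact_mod_cast hN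
  set a := Real.sqrt N with ha_def
  set b := Real.sqrt ((N:ℝ)+1) with hb_def
  have ha : 0 < a := Real.sqrt_pos.mpr (by linarith)
  have hb : 0 < b := Real.sqrt_pos.mpr (by linarith)
  have ha2 : a^2 = N := Real.sq_sqrt (by linarith)
  have hb2 : b^2 = (N:ℝ)+1 := Real.sq_sqrt (by linarith)
  have hab : a ≤ b := Real.sqrt_le_sqrt (by linarith)
  have h1 : (b-a)*(b+a) = 1 := by nlinarith
  rw [div_sub_div _ _ (ne_of_gt ha) (ne_of_gt hb), div_le_div_iff₀ (by nlinarith) (by positivity)]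
  have hbb : ((N:ℝ)+1) * b = b^2 * b := by rw [hb2]
  rw [hbb]
  nlinarith [mul_pos ha hb, mul_pos (mul_pos ha hb) hb, sq_nonneg (b-a), mul_nonneg (mul_nonneg (sub_nonneg.mpr hab) hb.le) hb.le]

lemma tele_aux (N : ℕ) (hN : 1 ≤ N) :
    ∑ n ∈ Finset.Icc 1 N, 1 / ((n:ℝ) * Real.sqrt n) ≤ 3 - 2 / Real.sqrt N := by
  induction N, hN using Nat.le_induction with
  | base => norm_num
  | succ N hN ih =>
    rw [Finset.sum_Icc_succ_top (by omega : 1 ≤ N + 1)]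
    have key : 1 / ((N+1:ℕ):ℝ) / Real.sqrt ((N+1:ℕ)) ≤ 2 / Real.sqrt N - 2 / Real.sqrt ((N:ℝ)+1) := by
      have := sqrt_step N hN
      push_cast
      rw [div_div]
      exact this
    push_cast at key ⊢
    have := add_le_add ih key
    rw [div_div] at this
    linarith

lemma tele (N : ℕ) : ∑ n ∈ Finset.Icc 1 N, 1 / ((n:ℝ) * Real.sqrt n) ≤ 3 := by
  rcases Nat.eq_zero_or_pos N with h | h
  · subst h; simp
  · refine (tele_aux N h).trans ?_
    have : 0 ≤ 2 / Real.sqrt N := by positivity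
    linarith

lemma innerSumBound (N n : ℕ) (hn1 : 1 ≤ n) (hnN : n ≤ N) :
    ∑ m ∈ Finset.Icc 1 N, (if n = m then 0 else 1 / |(n:ℝ) - m|)
      ≤ 2 * ∑ k ∈ Finset.Icc 1 N, 1/(k:ℝ) := by
  have hstep : ∀ m ∈ Finset.Icc 1 N, (if n = m then 0 else 1 / |(n:ℝ) - m|)
      ≤ (if m < n then 1/(((n-m : ℕ)):ℝ) else 0) + (if n < m then 1/(((m-n:ℕ)):ℝ) else 0) := by
    intro m hm
    rcases lt_trichotomy n m with h | h | h
    · rw [if_neg (by omega), if_neg (by omega), if_pos h, zero_add]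
      have : |(n:ℝ) - m| = ((m - n : ℕ) : ℝ) := by
        rw [abs_sub_comm, abs_of_pos (by
          have : (n:ℝ) < m := by exact_mod_cast h
          linarith)]
        push_cast [Nat.cast_sub h.le]; ring
      rw [this]
    · simp [h]
    · rw [if_neg (by omega), if_pos h, if_neg (by omega), add_zero]
      have : |(n:ℝ) - m| = ((n - m : ℕ) : ℝ) := by
        rw [abs_of_pos (by
          have : (m:ℝ) < n := by exact_mod_cast h
          linarith)]
        push_cast [Nat.cast_sub h.le]; ring
      rw [this]
  refine le_trans (Finset.sum_le_sum hstep) ?_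
  rw [Finset.sum_add_distrib]
  have hnonneg : ∀ k ∈ Finset.Icc 1 N, (0:ℝ) ≤ 1/(k:ℝ) := by intro k _; positivity
  have h1 : ∑ m ∈ Finset.Icc 1 N, (if m < n then 1/(((n-m:ℕ)):ℝ) else 0)
      ≤ ∑ k ∈ Finset.Icc 1 N, 1/(k:ℝ) := by
    rw [← Finset.sum_filter]
    have hf : (Finset.Icc 1 N).filter (fun m => m < n) = Finset.Icc 1 (n-1) := by
      ext m; simp only [Finset.mem_filter, Finset.mem_Icc]; omega
    rw [hf]
    have heq : ∑ m ∈ Finset.Icc 1 (n-1), 1/(((n-m:ℕ)):ℝ)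
        = ∑ k ∈ Finset.Icc 1 (n-1), 1/(k:ℝ) := by
      refine Finset.sum_nbij' (fun m => n - m) (fun k => n - k) ?_ ?_ ?_ ?_ (fun m hm => rfl) <;>
        simp only [Finset.mem_Icc] <;> intros <;> omega
    rw [heq]
    exact Finset.sum_le_sum_of_subset_of_nonneg
      (Finset.Icc_subset_Icc le_rfl (by omega)) (fun k hk _ => by positivity)
  have h2 : ∑ m ∈ Finset.Icc 1 N, (if n < m then 1/(((m-n:ℕ)):ℝ) else 0)
      ≤ ∑ k ∈ Finset.Icc 1 N, 1/(k:ℝ) := by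
    rw [← Finset.sum_filter]
    have hf : (Finset.Icc 1 N).filter (fun m => n < m) = Finset.Icc (n+1) N := by
      ext m; simp only [Finset.mem_filter, Finset.mem_Icc]; omega
    rw [hf]
    have heq : ∑ m ∈ Finset.Icc (n+1) N, 1/(((m-n:ℕ)):ℝ)
        = ∑ k ∈ Finset.Icc 1 (N-n), 1/(k:ℝ) := by
      refine Finset.sum_nbij' (fun m => m - n) (fun k => k + n) ?_ ?_ ?_ ?_ (fun m hm => rfl) <;>
        simp only [Finset.mem_Icc] <;> intros <;> omega
    rw [heq]
    exact Finset.sum_le_sum_of_subset_of_nonneg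
      (Finset.Icc_subset_Icc le_rfl (by omega)) (fun k hk _ => by positivity)
  linarith

lemma cross_bound (T : ℝ) (n m : ℕ) (hn : 1 ≤ n) (hm : n < m) :
    |∫ t in T..(2*T), Real.cos ((2*t) * Real.log n) * Real.cos ((2*t) * Real.log m)|
      ≤ 2 * m / ((m:ℝ) - n) := by
  have hn0 : (0:ℝ) < n := by exact_mod_cast hn
  have hnm : (n:ℝ) < m := by exact_mod_cast hm
  have hm0 : (0:ℝ) < m := lt_trans hn0 hnm
  have hd : (0:ℝ) < (m:ℝ) - n := by linarith
  set a := Real.log m - Real.log n with ha_def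
  set b := Real.log m + Real.log n with hb_def
  have hLn : 0 ≤ Real.log n := Real.log_nonneg (by exact_mod_cast hn)
  have hm2 : (2:ℝ) ≤ m := by exact_mod_cast (by omega : 2 ≤ m)
  have hLm : Real.log 2 ≤ Real.log m := Real.log_le_log (by norm_num) hm2
  have hlog2 : (1/2 : ℝ) ≤ Real.log 2 := by
    have := Real.log_two_gt_d9; linarith
  have ha : ((m:ℝ) - n) / m ≤ a := by
    have h1 : Real.log ((n:ℝ)/m) ≤ (n:ℝ)/m - 1 := Real.log_le_sub_one_of_pos (by positivity)
    rw [Real.log_div (ne_of_gt hn0) (ne_of_gt hm0)] at h1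
    rw [ha_def]
    have : ((m:ℝ) - n)/m = 1 - (n:ℝ)/m := by field_simp
    rw [this]; linarith
  have ha0 : 0 < a := lt_of_lt_of_le (by positivity) ha
  have hb0 : (1/2:ℝ) ≤ b := by rw [hb_def]; linarith
  have hsplit : ∀ t : ℝ, Real.cos ((2*t) * Real.log n) * Real.cos ((2*t) * Real.log m)
      = (1/2) * Real.cos ((2*t) * a) + (1/2) * Real.cos ((2*t) * b) := by
    intro t
    rw [ha_def, hb_def, mul_sub, mul_add, Real.cos_sub, Real.cos_add]
    ring
  have hcont : ∀ d : ℝ, Continuous fun t : ℝ => 1/2 * Real.cos ((2*t)*d) := by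
    intro d; fun_prop
  have hint : (∫ t in T..(2*T), Real.cos ((2*t) * Real.log n) * Real.cos ((2*t) * Real.log m))
      = (1/2) * (∫ t in T..(2*T), Real.cos ((2*t) * a))
        + (1/2) * (∫ t in T..(2*T), Real.cos ((2*t) * b)) := by
    rw [← intervalIntegral.integral_const_mul, ← intervalIntegral.integral_const_mul,
      ← intervalIntegral.integral_add]
    · exact intervalIntegral.integral_congr (fun t _ => hsplit t)
    · exact (hcont a).intervalIntegrable _ _
    · exact (hcont b).intervalIntegrable _ _
  rw [hint]
  have h1 : |∫ t in T..(2*T), Real.cos ((2*t) * a)| ≤ 1/a := by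
    have := osc_bound T (2*T) a (ne_of_gt ha0)
    rwa [abs_of_pos ha0] at this
  have h2 : |∫ t in T..(2*T), Real.cos ((2*t) * b)| ≤ 2 := by
    have := osc_bound T (2*T) b (by positivity)
    rw [abs_of_pos (by linarith : (0:ℝ) < b)] at this
    refine this.trans ?_
    rw [div_le_iff₀ (by linarith)]
    linarith
  have h1' : 1/a ≤ (m:ℝ)/((m:ℝ)-n) := by
    rw [div_le_div_iff₀ ha0 hd]
    have := mul_le_mul_of_nonneg_left ha (le_of_lt hm0)
    calc 1 * ((m:ℝ)-n) = ((m:ℝ)-n) := by ring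
      _ = (m:ℝ) * (((m:ℝ)-n)/m) := by field_simp
      _ ≤ (m:ℝ) * a := by exact mul_le_mul_of_nonneg_left ha (le_of_lt hm0)
  have hq : (1:ℝ) ≤ (m:ℝ)/((m:ℝ)-n) := by
    rw [le_div_iff₀ hd]; linarith
  calc |(1/2) * (∫ t in T..(2*T), Real.cos ((2*t) * a))
        + (1/2) * (∫ t in T..(2*T), Real.cos ((2*t) * b))|
      ≤ (1/2) * |∫ t in T..(2*T), Real.cos ((2*t) * a)|
        + (1/2) * |∫ t in T..(2*T), Real.cos ((2*t) * b)| := by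
        refine (abs_add_le _ _).trans ?_
        rw [abs_mul, abs_mul]
        rw [abs_of_pos (by norm_num : (0:ℝ) < 1/2)]
    _ ≤ (1/2) * (1/a) + (1/2) * 2 := by
        refine add_le_add (mul_le_mul_of_nonneg_left h1 (by norm_num))
          (mul_le_mul_of_nonneg_left h2 (by norm_num))
    _ ≤ (1/2) * ((m:ℝ)/((m:ℝ)-n)) + 1 * ((m:ℝ)/((m:ℝ)-n)) := by
        refine add_le_add (mul_le_mul_of_nonneg_left h1' (by norm_num)) (by linarith)
    _ ≤ 2 * m / ((m:ℝ) - n) := by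
        rw [mul_div_assoc]
        linarith

lemma sq_bound (T : ℝ) (hT : 1 ≤ T) (c : ℕ → ℝ) (hc0 : ∀ n, 0 ≤ c n)
    (hc : ∀ n ∈ Finset.Icc 1 ⌊T⌋₊, c n ≤ (1 + Real.log n)^2 / n) :
    (∫ t in T..(2*T), (∑ n ∈ Finset.Icc 1 ⌊T⌋₊, c n * Real.cos ((2*t) * Real.log n))^2)
      ≤ 12288 * T + 8 * (1 + Real.log T)^6 := by
  set N := ⌊T⌋₊ with hN_def
  set S := Finset.Icc 1 N with hS_def
  have hT0 : (0:ℝ) < T := by linarith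
  have hTN : (N:ℝ) ≤ T := Nat.floor_le (by linarith)
  set L : ℝ := 1 + Real.log T with hL_def
  have hL1 : 1 ≤ L := by have := Real.log_nonneg hT; rw [hL_def]; linarith
  set H : ℝ := ∑ k ∈ S, 1/(k:ℝ) with hH_def
  have hH0 : 0 ≤ H := by rw [hH_def]; positivity
  have hHL : H ≤ L := by
    rcases Nat.eq_zero_or_pos N with h | h
    · rw [hH_def, hS_def, h]; simp; linarith
    · refine (harm_le N).trans ?_
      rw [hL_def]
      have : Real.log N ≤ Real.log T := Real.log_le_log (by exact_mod_cast h) hTN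
      linarith
  have hmem : ∀ n ∈ S, 1 ≤ n ∧ (n:ℝ) ≤ T := by
    intro n hn
    rw [hS_def, Finset.mem_Icc] at hn
    refine ⟨hn.1, le_trans ?_ hTN⟩
    exact_mod_cast hn.2
  have hcL : ∀ n ∈ S, c n ≤ L^2 / n := by
    intro n hn
    obtain ⟨h1, h2⟩ := hmem n hn
    have hn0 : (0:ℝ) < n := by exact_mod_cast h1
    refine (hc n hn).trans ?_
    have h0 : 0 ≤ 1 + Real.log n := by have := Real.log_nonneg (by exact_mod_cast h1 : (1:ℝ) ≤ n); linarith
    have hle : 1 + Real.log n ≤ L := by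
      rw [hL_def]
      have : Real.log n ≤ Real.log T := Real.log_le_log hn0 h2
      linarith
    gcongr
  -- the integral I n m
  set I : ℕ → ℕ → ℝ := fun n m =>
    ∫ t in T..(2*T), Real.cos ((2*t) * Real.log n) * Real.cos ((2*t) * Real.log m) with hI_def
  -- expansion
  have hcont : ∀ n m : ℕ, Continuous fun t : ℝ =>
      (c n * c m) * (Real.cos ((2*t) * Real.log n) * Real.cos ((2*t) * Real.log m)) := by
    intro n m; fun_prop
  have h1 : (∫ t in T..(2*T), (∑ n ∈ S, c n * Real.cos ((2*t) * Real.log n))^2)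
      = ∑ n ∈ S, ∑ m ∈ S, (c n * c m) * I n m := by
    have e1 : Set.EqOn (fun t => (∑ n ∈ S, c n * Real.cos ((2*t) * Real.log n))^2)
        (fun t => ∑ n ∈ S, ∑ m ∈ S,
          (c n * c m) * (Real.cos ((2*t) * Real.log n) * Real.cos ((2*t) * Real.log m)))
        (Set.uIcc T (2*T)) := by
      intro t _
      simp only
      rw [sq, Finset.sum_mul_sum]
      exact Finset.sum_congr rfl fun n _ => Finset.sum_congr rfl fun m _ => by ring
    rw [intervalIntegral.integral_congr e1]
    rw [intervalIntegral.integral_finset_sum (fun n _ =>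
      (Continuous.intervalIntegrable (by fun_prop) _ _))]
    refine Finset.sum_congr rfl fun n _ => ?_
    rw [intervalIntegral.integral_finset_sum (fun m _ =>
      ((hcont n m).intervalIntegrable _ _))]
    refine Finset.sum_congr rfl fun m _ => ?_
    rw [intervalIntegral.integral_const_mul]
  rw [h1]
  -- termwise bound
  set B : ℕ → ℕ → ℝ := fun n m =>
    (if n = m then 4096 * T / ((n:ℝ) * Real.sqrt n) else 0)
      + (if n = m then 0 else (2 * L^4) * (1/((n:ℝ) * |(n:ℝ) - m|) + 1/((m:ℝ) * |(n:ℝ) - m|)))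
    with hB_def
  have hoff : ∀ n ∈ S, ∀ m ∈ S, n < m → (c n * c m) * I n m
      ≤ (2 * L^4) * (1/((n:ℝ) * |(n:ℝ) - m|)) := by
    intro n hn m hm hlt
    obtain ⟨hn1, hnT⟩ := hmem n hn
    obtain ⟨hm1, hmT⟩ := hmem m hm
    have hn0 : (0:ℝ) < n := by exact_mod_cast hn1
    have hm0 : (0:ℝ) < m := by exact_mod_cast Nat.zero_lt_of_lt hlt
    have hnm : (n:ℝ) < m := by exact_mod_cast hlt
    have habs : |(n:ℝ) - m| = (m:ℝ) - n := by rw [abs_sub_comm, abs_of_pos (by linarith)]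
    have hIb : |I n m| ≤ 2 * m / ((m:ℝ) - n) := cross_bound T n m hn1 hlt
    have hcn : 0 ≤ c n := hc0 n
    have hcm : 0 ≤ c m := hc0 m
    calc (c n * c m) * I n m ≤ (c n * c m) * |I n m| :=
          mul_le_mul_of_nonneg_left (le_abs_self _) (by positivity)
      _ ≤ (L^2/n * (L^2/m)) * (2 * m / ((m:ℝ) - n)) := by
          apply mul_le_mul
          · exact mul_le_mul (hcL n hn) (hcL m hm) hcm (by positivity)
          · exact hIb
          · exact abs_nonneg _
          · positivity
      _ = (2 * L^4) * (1/((n:ℝ) * ((m:ℝ) - n))) := by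
          have e1 : (n:ℝ) ≠ 0 := ne_of_gt hn0
          have e2 : (m:ℝ) ≠ 0 := ne_of_gt hm0
          have e3 : (m:ℝ) - n ≠ 0 := sub_ne_zero_of_ne hnm.ne'
          field_simp
      _ = (2 * L^4) * (1/((n:ℝ) * |(n:ℝ) - m|)) := by rw [habs]
  have hterm : ∀ n ∈ S, ∀ m ∈ S, (c n * c m) * I n m ≤ B n m := by
    intro n hn m hm
    obtain ⟨hn1, hnT⟩ := hmem n hn
    obtain ⟨hm1, hmT⟩ := hmem m hm
    have hn0 : (0:ℝ) < n := by exact_mod_cast hn1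
    have hm0 : (0:ℝ) < m := by exact_mod_cast hm1
    rcases lt_trichotomy n m with h | h | h
    · rw [hB_def]
      simp only [if_neg (by omega : ¬ n = m)]
      rw [zero_add]
      refine (hoff n hn m hm h).trans ?_
      have h0' : (0:ℝ) ≤ 1/((m:ℝ) * |(n:ℝ) - m|) := by positivity
      have hL4 : (0:ℝ) ≤ 2 * L^4 := by positivity
      exact mul_le_mul_of_nonneg_left (le_add_of_nonneg_right h0') hL4
    · -- diagonal
      subst h
      have eB : B n n = 4096 * T / ((n:ℝ) * Real.sqrt n) := by simp [hB_def]
      rw [eB]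
      have hId : I n n ≤ T := by
        rw [hI_def]
        calc (∫ t in T..(2*T), Real.cos ((2*t) * Real.log n) * Real.cos ((2*t) * Real.log n))
            ≤ ∫ _t in T..(2*T), (1:ℝ) := by
              apply intervalIntegral.integral_mono_on (by linarith)
              · exact Continuous.intervalIntegrable (by fun_prop) _ _
              · exact intervalIntegrable_const
              · intro t _
                have h1 := Real.neg_one_le_cos ((2*t) * Real.log n)
                have h2 := Real.cos_le_one ((2*t) * Real.log n)
                nlinarith
          _ = T := by rw [intervalIntegral.integral_const, smul_eq_mul]; ring
      have hId0 : 0 ≤ I n n := by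
        rw [hI_def]
        apply intervalIntegral.integral_nonneg (by linarith)
        intro t _
        exact mul_self_nonneg _
      have hsq : c n * c n ≤ 4096 / ((n:ℝ) * Real.sqrt n) := by
        have h4 := log_pow4 n hn1
        have hsn : 0 < Real.sqrt n := Real.sqrt_pos.mpr hn0
        have hc2 : c n * c n ≤ ((1 + Real.log n)^2/n) * ((1 + Real.log n)^2/n) :=
          mul_le_mul (hc n hn) (hc n hn) (hc0 n) (by positivity)
        refine hc2.trans ?_
        rw [div_mul_div_comm]
        rw [show (1 + Real.log n)^2 * (1 + Real.log n)^2 = (1 + Real.log n)^4 from by ring]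
        rw [show (n:ℝ) * (n:ℝ) = (n:ℝ)^2 from by ring]
        rw [div_le_div_iff₀ (by positivity) (by positivity)]
        calc (1 + Real.log n)^4 * ((n:ℝ) * Real.sqrt n)
            ≤ (4096 * Real.sqrt n) * ((n:ℝ) * Real.sqrt n) := by
              apply mul_le_mul_of_nonneg_right h4 (by positivity)
          _ = 4096 * ((n:ℝ) * (Real.sqrt n * Real.sqrt n)) := by ring
          _ = 4096 * ((n:ℝ) * n) := by rw [Real.mul_self_sqrt hn0.le]
          _ = 4096 * (n:ℝ)^2 := by ring
      calc (c n * c n) * I n n ≤ (4096 / ((n:ℝ) * Real.sqrt n)) * T := by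
            apply mul_le_mul hsq hId hId0 (by positivity)
        _ = 4096 * T / ((n:ℝ) * Real.sqrt n) := by ring
    · -- n > m : symmetric
      rw [hB_def]
      simp only [if_neg (by omega : ¬ n = m)]
      rw [zero_add]
      have hsymm : I n m = I m n := by
        rw [hI_def]
        simp only
        exact intervalIntegral.integral_congr (fun t _ => by ring)
      rw [hsymm, show c n * c m = c m * c n from mul_comm _ _]
      refine (hoff m hm n hn h).trans ?_
      have habs : |(m:ℝ) - n| = |(n:ℝ) - m| := abs_sub_comm _ _
      rw [habs]
      have h0' : (0:ℝ) ≤ 1/((n:ℝ) * |(n:ℝ) - m|) := by positivity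
      have hL4 : (0:ℝ) ≤ 2 * L^4 := by positivity
      exact mul_le_mul_of_nonneg_left (le_add_of_nonneg_left h0') hL4
  refine (Finset.sum_le_sum (fun n hn => Finset.sum_le_sum (hterm n hn))).trans ?_
  -- now sum B
  have hBsplit : ∑ n ∈ S, ∑ m ∈ S, B n m
      = (∑ n ∈ S, ∑ m ∈ S, (if n = m then 4096 * T / ((n:ℝ) * Real.sqrt n) else 0))
        + ((∑ n ∈ S, ∑ m ∈ S, (if n = m then 0 else (2 * L^4) * (1/((n:ℝ) * |(n:ℝ) - m|))))
          + (∑ n ∈ S, ∑ m ∈ S, (if n = m then 0 else (2 * L^4) * (1/((m:ℝ) * |(n:ℝ) - m|))))) := by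
    rw [← Finset.sum_add_distrib, ← Finset.sum_add_distrib]
    refine Finset.sum_congr rfl fun n _ => ?_
    rw [← Finset.sum_add_distrib, ← Finset.sum_add_distrib]
    refine Finset.sum_congr rfl fun m _ => ?_
    rw [hB_def]
    rcases eq_or_ne n m with h | h
    · simp [h]
    · simp only [if_neg h]
      ring
  rw [hBsplit]
  have hD : (∑ n ∈ S, ∑ m ∈ S, (if n = m then 4096 * T / ((n:ℝ) * Real.sqrt n) else 0))
      ≤ 12288 * T := by
    have e : ∀ n ∈ S, (∑ m ∈ S, (if n = m then 4096 * T / ((n:ℝ) * Real.sqrt n) else 0))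
        = 4096 * T * (1 / ((n:ℝ) * Real.sqrt n)) := by
      intro n hn
      rw [Finset.sum_ite_eq S n (fun _ => 4096 * T / ((n:ℝ) * Real.sqrt n)), if_pos hn]
      ring
    rw [Finset.sum_congr rfl e, ← Finset.mul_sum]
    calc 4096 * T * (∑ n ∈ S, 1 / ((n:ℝ) * Real.sqrt n)) ≤ 4096 * T * 3 := by
          exact mul_le_mul_of_nonneg_left (tele N) (by positivity)
      _ = 12288 * T := by ring
  have hE1 : (∑ n ∈ S, ∑ m ∈ S, (if n = m then 0 else (2 * L^4) * (1/((n:ℝ) * |(n:ℝ) - m|))))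
      ≤ 4 * L^4 * H^2 := by
    have e : ∀ n ∈ S, (∑ m ∈ S, (if n = m then 0 else (2 * L^4) * (1/((n:ℝ) * |(n:ℝ) - m|))))
        ≤ (2 * L^4 / n) * (2 * H) := by
      intro n hn
      rw [hS_def, Finset.mem_Icc] at hn
      have heq : (∑ m ∈ S, (if n = m then 0 else (2 * L^4) * (1/((n:ℝ) * |(n:ℝ) - m|))))
          = (2 * L^4 / n) * ∑ m ∈ S, (if n = m then 0 else 1 / |(n:ℝ) - m|) := by
        rw [Finset.mul_sum]
        refine Finset.sum_congr rfl fun m _ => ?_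
        rcases eq_or_ne n m with h | h
        · simp [h]
        · simp only [if_neg h]; ring
      rw [heq]
      refine mul_le_mul_of_nonneg_left ?_ (by positivity)
      exact innerSumBound N n hn.1 hn.2
    refine (Finset.sum_le_sum e).trans ?_
    have e2 : ∑ n ∈ S, (2 * L^4 / (n:ℝ)) * (2 * H) = (4 * L^4 * H) * H := by
      have e3 : ∀ n ∈ S, (2 * L^4 / (n:ℝ)) * (2 * H) = (4 * L^4 * H) * (1/(n:ℝ)) :=
        fun n _ => by ring
      rw [Finset.sum_congr rfl e3, ← Finset.mul_sum, ← hH_def]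
    rw [e2]
    exact le_of_eq (by ring)
  have hE2 : (∑ n ∈ S, ∑ m ∈ S, (if n = m then 0 else (2 * L^4) * (1/((m:ℝ) * |(n:ℝ) - m|))))
      ≤ 4 * L^4 * H^2 := by
    rw [Finset.sum_comm]
    have e : ∀ m ∈ S, (∑ n ∈ S, (if n = m then 0 else (2 * L^4) * (1/((m:ℝ) * |(n:ℝ) - m|))))
        ≤ (2 * L^4 / m) * (2 * H) := by
      intro m hm
      rw [hS_def, Finset.mem_Icc] at hm
      have heq : (∑ n ∈ S, (if n = m then 0 else (2 * L^4) * (1/((m:ℝ) * |(n:ℝ) - m|))))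
          = (2 * L^4 / m) * ∑ n ∈ S, (if m = n then 0 else 1 / |(m:ℝ) - n|) := by
        rw [Finset.mul_sum]
        refine Finset.sum_congr rfl fun n _ => ?_
        rcases eq_or_ne n m with h | h
        · rw [if_pos h, if_pos h.symm, mul_zero]
        · rw [if_neg h, if_neg (Ne.symm h), abs_sub_comm (m:ℝ) n]
          ring
      rw [heq]
      refine mul_le_mul_of_nonneg_left ?_ (by positivity)
      exact innerSumBound N m hm.1 hm.2
    refine (Finset.sum_le_sum e).trans ?_
    have e2 : ∑ m ∈ S, (2 * L^4 / (m:ℝ)) * (2 * H) = (4 * L^4 * H) * H := by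
      have e3 : ∀ m ∈ S, (2 * L^4 / (m:ℝ)) * (2 * H) = (4 * L^4 * H) * (1/(m:ℝ)) :=
        fun m _ => by ring
      rw [Finset.sum_congr rfl e3, ← Finset.mul_sum, ← hH_def]
    rw [e2]
    exact le_of_eq (by ring)
  have hL4 : (0:ℝ) ≤ L^4 := by positivity
  have hHL2 : H^2 ≤ L^2 := by nlinarith
  have hfinal : 4 * L^4 * H^2 + 4 * L^4 * H^2 ≤ 8 * L^6 := by
    have h1 := mul_le_mul_of_nonneg_left hHL2 hL4
    nlinarith [h1]
  exact add_le_add hD ((add_le_add hE1 hE2).trans hfinal)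

theorem mixed_integral_u_T_bound :
    ∃ C > 0, ∀ᶠ T : ℝ in atTop,
      (∫ t in T..(2 * T),
          |∑ n ∈ Finset.Icc 1 ⌊T⌋₊, Real.cos ((2 * t) * Real.log n) / (n : ℝ)| *
          |-∑ n ∈ Finset.Icc 1 ⌊T⌋₊,
              Real.cos ((2 * t) * Real.log n) * (Real.log n) ^ 2 / (n : ℝ)|)
        ≤ C * T := by
  refine ⟨12289, by norm_num, ?_⟩
  filter_upwards [eventually_ge_atTop (1:ℝ),
    eventually_ge_atTop ((18014398509481984:ℝ))] with T hT1 hT2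
  set N := ⌊T⌋₊ with hN_def
  set c1 : ℕ → ℝ := fun n => 1/(n:ℝ) with hc1
  set c2 : ℕ → ℝ := fun n => (Real.log n)^2/(n:ℝ) with hc2
  set u : ℝ → ℝ := fun t => ∑ n ∈ Finset.Icc 1 N, c1 n * Real.cos ((2*t) * Real.log n) with hu
  set v : ℝ → ℝ := fun t => ∑ n ∈ Finset.Icc 1 N, c2 n * Real.cos ((2*t) * Real.log n) with hv
  have heq : ∀ t : ℝ,
      |∑ n ∈ Finset.Icc 1 N, Real.cos ((2*t) * Real.log n) / (n:ℝ)| *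
      |-∑ n ∈ Finset.Icc 1 N, Real.cos ((2*t) * Real.log n) * (Real.log n)^2 / (n:ℝ)|
      = |u t| * |v t| := by
    intro t
    rw [abs_neg]
    congr 2
    · exact Finset.sum_congr rfl fun n _ => by rw [hc1]; ring
    · exact Finset.sum_congr rfl fun n _ => by rw [hc2]; ring
  have hle : T ≤ 2*T := by linarith
  have hcontu : Continuous u := by
    rw [hu]; exact continuous_finset_sum _ fun n _ => by fun_prop
  have hcontv : Continuous v := by
    rw [hv]; exact continuous_finset_sum _ fun n _ => by fun_prop
  have key : (∫ t in T..(2*T),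
      |∑ n ∈ Finset.Icc 1 N, Real.cos ((2*t) * Real.log n) / (n:ℝ)| *
      |-∑ n ∈ Finset.Icc 1 N, Real.cos ((2*t) * Real.log n) * (Real.log n)^2 / (n:ℝ)|)
      ≤ (1/2) * (∫ t in T..(2*T), (u t)^2) + (1/2) * (∫ t in T..(2*T), (v t)^2) := by
    calc (∫ t in T..(2*T),
        |∑ n ∈ Finset.Icc 1 N, Real.cos ((2*t) * Real.log n) / (n:ℝ)| *
        |-∑ n ∈ Finset.Icc 1 N, Real.cos ((2*t) * Real.log n) * (Real.log n)^2 / (n:ℝ)|)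
        = ∫ t in T..(2*T), |u t| * |v t| :=
          intervalIntegral.integral_congr (fun t _ => heq t)
      _ ≤ ∫ t in T..(2*T), ((1/2) * (u t)^2 + (1/2) * (v t)^2) := by
          apply intervalIntegral.integral_mono_on hle
          · exact (hcontu.abs.mul hcontv.abs).intervalIntegrable _ _
          · exact ((continuous_const.mul (hcontu.pow 2)).add
              (continuous_const.mul (hcontv.pow 2))).intervalIntegrable _ _
          · intro t _
            nlinarith [sq_nonneg (|u t| - |v t|), sq_abs (u t), sq_abs (v t),
              abs_nonneg (u t), abs_nonneg (v t)]
      _ = (1/2) * (∫ t in T..(2*T), (u t)^2) + (1/2) * (∫ t in T..(2*T), (v t)^2) := by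
          rw [intervalIntegral.integral_add (f := fun t => (1/2) * (u t)^2) (g := fun t => (1/2) * (v t)^2) ((continuous_const.mul (hcontu.pow 2)).intervalIntegrable _ _)
            ((continuous_const.mul (hcontv.pow 2)).intervalIntegrable _ _),
            intervalIntegral.integral_const_mul, intervalIntegral.integral_const_mul]
  have hb1 : (∫ t in T..(2*T), (u t)^2) ≤ 12288 * T + 8 * (1 + Real.log T)^6 := by
    apply sq_bound T hT1 c1
    · intro n; rw [hc1]; positivity
    · intro n hn
      rw [Finset.mem_Icc] at hn
      have hn0 : (0:ℝ) < n := by exact_mod_cast hn.1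
      have hlog : 0 ≤ Real.log n := Real.log_nonneg (by exact_mod_cast hn.1)
      rw [hc1, div_le_div_iff₀ hn0 hn0]
      nlinarith [mul_nonneg hlog hn0.le, mul_nonneg (mul_nonneg hlog hlog) hn0.le]
  have hb2 : (∫ t in T..(2*T), (v t)^2) ≤ 12288 * T + 8 * (1 + Real.log T)^6 := by
    apply sq_bound T hT1 c2
    · intro n; rw [hc2]; positivity
    · intro n hn
      rw [Finset.mem_Icc] at hn
      have hn0 : (0:ℝ) < n := by exact_mod_cast hn.1
      have hlog : 0 ≤ Real.log n := Real.log_nonneg (by exact_mod_cast hn.1)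
      rw [hc2, div_le_div_iff₀ hn0 hn0]
      nlinarith [mul_nonneg hlog hn0.le, mul_nonneg (mul_nonneg hlog hlog) hn0.le]
  have htail : 8 * (1 + Real.log T)^6 ≤ T := by
    have h6 := log_pow6 T hT1
    have hsT : (134217728:ℝ) ≤ Real.sqrt T := by
      rw [show (134217728:ℝ) = Real.sqrt (134217728^2) from (Real.sqrt_sq (by norm_num)).symm]
      exact Real.sqrt_le_sqrt (by norm_num; linarith)
    have hss : Real.sqrt T * Real.sqrt T = T := Real.mul_self_sqrt (by linarith)
    nlinarith [Real.sqrt_nonneg T]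
  calc (∫ t in T..(2*T),
      |∑ n ∈ Finset.Icc 1 N, Real.cos ((2*t) * Real.log n) / (n:ℝ)| *
      |-∑ n ∈ Finset.Icc 1 N, Real.cos ((2*t) * Real.log n) * (Real.log n)^2 / (n:ℝ)|)
      ≤ (1/2) * (∫ t in T..(2*T), (u t)^2) + (1/2) * (∫ t in T..(2*T), (v t)^2) := key
    _ ≤ (1/2) * (12288 * T + 8 * (1 + Real.log T)^6)
        + (1/2) * (12288 * T + 8 * (1 + Real.log T)^6) := by
        have h8 : (0:ℝ) ≤ 8 * (1 + Real.log T)^6 := by positivity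
        gcongr
    _ = 12288 * T + 8 * (1 + Real.log T)^6 := by ring
    _ ≤ 12288 * T + T := by linarith
    _ = 12289 * T := by ring
end
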